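/- Let G be a ribbon graph with a unique cycle of length l (l even), with n1 additional tree edges inside the cycle and n2 outside. Then G has exactly four distinct double-stepped Green walks: two of length l/2 + n1 and two of length l/2 + n2. -/

import Mathlib

/-!
A ribbon graph is encoded as a combinatorial map on a finite set `H` of half-edges:
`sigma` is the fixed-point-free involution pairing the two half-edges of each edge,
and `rho` is the permutation whose cycles are the cyclic orderings of the half-edges
around each vertex.  Edges are the orbits of `sigma`, vertices the orbits of `rho`.
The Green walk step sends a half-edge `x` at a vertex `v` to the half-edge `y`
whose opposite half-edge is the successor `rho x` of `x` at `v`, i.e. `y = sigma (rho x)`.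
-/

structure RibbonGraph (H : Type) where
  sigma : Equiv.Perm H
  rho : Equiv.Perm H
  invol : ∀ x, sigma (sigma x) = x
  noFix : ∀ x, sigma x ≠ x
  conn : ∀ x y, Relation.EqvGen (fun a b => sigma a = b ∨ rho a = b) x y

/-- The orbit ("same cycle") setoid of a permutation. -/
def sameCycleSetoid {H : Type} (π : Equiv.Perm H) : Setoid H :=
  ⟨π.SameCycle, ⟨fun x => Equiv.Perm.SameCycle.refl π x, fun h => h.symm,
    fun h₁ h₂ => h₁.trans h₂⟩⟩

namespace RibbonGraph

variable {H : Type}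

/-- The step map of the (anticlockwise) Green walk: `x ↦ sigma (rho x)`. -/
def step (G : RibbonGraph H) : Equiv.Perm H := G.rho.trans G.sigma

/-- The step map of the clockwise Green walk: `x ↦ sigma (rho⁻¹ x)`. -/
def stepC (G : RibbonGraph H) : Equiv.Perm H := G.rho.symm.trans G.sigma

/-- The number of edges: the number of orbits of the involution `sigma`. -/
noncomputable def numEdges (G : RibbonGraph H) : ℕ := Nat.card (Quotient (sameCycleSetoid G.sigma))

/-- The number of vertices: the number of orbits of `rho`. -/
noncomputable def numVertices (G : RibbonGraph H) : ℕ := Nat.card (Quotient (sameCycleSetoid G.rho))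

/-- A (connected) ribbon graph is a tree when `#vertices = #edges + 1`. -/
def IsTree (G : RibbonGraph H) : Prop := G.numVertices = G.numEdges + 1

/-- A half-edge `x` spans a bridge if its edge `{x, sigma x}` disconnects the graph:
there is no walk from `x` to `sigma x` avoiding that edge. -/
def IsBridge (G : RibbonGraph H) (x₀ : H) : Prop :=
  ¬ Relation.ReflTransGen
      (fun a b => G.rho a = b ∨ G.rho b = a ∨ (G.sigma a = b ∧ a ≠ x₀ ∧ a ≠ G.sigma x₀))
      x₀ (G.sigma x₀)

end RibbonGraph

-- ===== Auxiliary development =====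
namespace GreenAux
open Equiv
open scoped Classical


variable {α : Type*}

/-- The setoid obtained from `s` by merging the classes of `a` and `b`. -/
def mergeSetoid (s : Setoid α) (a b : α) : Setoid α where
  r x y := s x y ∨ (s x a ∧ s b y) ∨ (s x b ∧ s a y)
  iseqv := by
    constructor
    · intro x; exact Or.inl (s.refl' x)
    · rintro x y (h | ⟨h1, h2⟩ | ⟨h1, h2⟩)
      · exact Or.inl (s.symm' h)
      · exact Or.inr (Or.inr ⟨s.symm' h2, s.symm' h1⟩)
      · exact Or.inr (Or.inl ⟨s.symm' h2, s.symm' h1⟩)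
    · rintro x y z (h | ⟨h1, h2⟩ | ⟨h1, h2⟩) (g | ⟨g1, g2⟩ | ⟨g1, g2⟩)
      · exact Or.inl (s.trans' h g)
      · exact Or.inr (Or.inl ⟨s.trans' h g1, g2⟩)
      · exact Or.inr (Or.inr ⟨s.trans' h g1, g2⟩)
      · exact Or.inr (Or.inl ⟨h1, s.trans' h2 g⟩)
      · exact Or.inl (s.trans' h1 (s.trans' (s.symm' (s.trans' h2 g1)) g2))
      · exact Or.inl (s.trans' h1 g2)
      · exact Or.inr (Or.inr ⟨h1, s.trans' h2 g⟩)
      · exact Or.inl (s.trans' h1 g2)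
      · exact Or.inl (s.trans' h1 (s.trans' (s.symm' (s.trans' h2 g1)) g2))

theorem mergeSetoid_rel_pair (s : Setoid α) (a b : α) : mergeSetoid s a b a b :=
  Or.inr (Or.inl ⟨s.refl' a, s.refl' b⟩)

theorem le_mergeSetoid (s : Setoid α) (a b : α) : s ≤ mergeSetoid s a b :=
  fun {_ _} h => Or.inl h

theorem mergeSetoid_eq_of_rel {s : Setoid α} {a b : α} (hab : s a b) :
    mergeSetoid s a b = s := by
  apply Setoid.ext
  intro x y
  constructor
  · rintro (h | ⟨h1, h2⟩ | ⟨h1, h2⟩)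
    · exact h
    · exact s.trans' (s.trans' h1 hab) h2
    · exact s.trans' (s.trans' h1 (s.symm' hab)) h2
  · exact Or.inl

theorem mergeSetoid_le {s t : Setoid α} {a b : α} (hst : s ≤ t) (hab : t a b) :
    mergeSetoid s a b ≤ t := by
  rintro x y (h | ⟨h1, h2⟩ | ⟨h1, h2⟩)
  · exact hst h
  · exact t.trans' (hst h1) (t.trans' hab (hst h2))
  · exact t.trans' (hst h1) (t.trans' (t.symm' hab) (hst h2))

theorem card_quotient_le_of_le [Finite α] {s t : Setoid α} (h : s ≤ t) :
    Nat.card (Quotient t) ≤ Nat.card (Quotient s) := by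
  refine Nat.card_le_card_of_surjective
    (Quotient.lift (fun x => Quotient.mk t x) (fun x y hxy => Quotient.sound (h hxy))) ?_
  intro q
  induction q using Quotient.inductionOn with
  | h x => exact ⟨Quotient.mk s x, rfl⟩

open scoped Classical in
/-- Merging two distinct classes drops the number of classes by one. -/
theorem card_quotient_mergeSetoid_add_one [Finite α] {s : Setoid α} {a b : α} (hab : ¬ s a b) :
    Nat.card (Quotient (mergeSetoid s a b)) + 1 = Nat.card (Quotient s) := by
  have key : Quotient (mergeSetoid s a b) ≃ {q : Quotient s // q ≠ Quotient.mk s b} := by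
    refine
      { toFun := Quotient.lift (fun x => if h : s x b then ⟨Quotient.mk s a, fun hq => hab (Quotient.exact hq)⟩
          else (⟨Quotient.mk s x, fun hq => h (Quotient.exact hq)⟩ : {q : Quotient s // q ≠ Quotient.mk s b})) ?_
        invFun := fun q => Quotient.lift (fun x => Quotient.mk (mergeSetoid s a b) x)
          (fun x y hxy => Quotient.sound (Or.inl hxy)) q.1
        left_inv := ?_
        right_inv := ?_ }
    · intro x y hxy
      rcases hxy with h | ⟨h1, h2⟩ | ⟨h1, h2⟩
      · by_cases hx : s x b
        · have hy : s y b := s.trans' (s.symm' h) hx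
          simp [hx, hy]
        · have hy : ¬ s y b := fun hy => hx (s.trans' h hy)
          simp only [hx, hy, dif_neg, not_false_iff]
          exact Subtype.ext (Quotient.sound h)
      · have hy : s y b := s.symm' h2
        have hx : ¬ s x b := fun hx => hab (s.trans' (s.symm' h1) hx)
        simp only [hx, hy, dif_pos, dif_neg, not_false_iff]
        exact Subtype.ext (Quotient.sound h1)
      · have hx : s x b := h1
        have hy : ¬ s y b := fun hy => hab (s.trans' h2 hy)
        simp only [hx, hy, dif_pos, dif_neg, not_false_iff]
        exact Subtype.ext (Quotient.sound h2)
    · intro q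
      induction q using Quotient.inductionOn with
      | h x =>
        by_cases hx : s x b
        · simp only [Quotient.lift_mk, hx, dif_pos]
          exact Quotient.sound (Or.inr (Or.inl ⟨s.refl' a, s.symm' hx⟩))
        · simp only [Quotient.lift_mk, hx, dif_neg, not_false_iff]
    · intro q
      obtain ⟨q, hq⟩ := q
      induction q using Quotient.inductionOn with
      | h x =>
        have hx : ¬ s x b := fun h => hq (Quotient.sound h)
        simp only [Quotient.lift_mk, hx, dif_neg, not_false_iff]
  have hopt : Nat.card (Quotient s) = Nat.card (Quotient (mergeSetoid s a b)) + 1 := by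
    calc Nat.card (Quotient s)
        = Nat.card (Option {q : Quotient s // q ≠ Quotient.mk s b}) :=
          (Nat.card_congr (Equiv.optionSubtypeNe (Quotient.mk s b))).symm
      _ = Nat.card ({q : Quotient s // q ≠ Quotient.mk s b} ⊕ PUnit.{1}) :=
          Nat.card_congr (Equiv.optionEquivSumPUnit _)
      _ = Nat.card {q : Quotient s // q ≠ Quotient.mk s b} + 1 := by
          rw [Nat.card_sum]; simp
      _ = Nat.card (Quotient (mergeSetoid s a b)) + 1 := by rw [Nat.card_congr key]
  omega

theorem card_quotient_mergeSetoid_le [Finite α] (s : Setoid α) (a b : α) :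
    Nat.card (Quotient (mergeSetoid s a b)) ≤ Nat.card (Quotient s) := by
  by_cases hab : s a b
  · rw [mergeSetoid_eq_of_rel hab]
  · have := card_quotient_mergeSetoid_add_one hab; omega

theorem card_quotient_le_mergeSetoid_add_one [Finite α] (s : Setoid α) (a b : α) :
    Nat.card (Quotient s) ≤ Nat.card (Quotient (mergeSetoid s a b)) + 1 := by
  by_cases hab : s a b
  · rw [mergeSetoid_eq_of_rel hab]; omega
  · exact (card_quotient_mergeSetoid_add_one hab).symm.le


/-- The orbit setoid of a permutation (same as in the problem file). -/
def scSetoid (π : Equiv.Perm α) : Setoid α :=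
  ⟨π.SameCycle, ⟨fun x => Equiv.Perm.SameCycle.refl π x, fun h => h.symm,
    fun h₁ h₂ => h₁.trans h₂⟩⟩

/-- If `s` relates every point to its image under `f`, then `s` contains `SameCycle f`. -/
theorem sameCycle_le_setoid (s : Setoid α) (f : Equiv.Perm α)
    (h : ∀ x, s x (f x)) {x y : α} (hxy : f.SameCycle x y) : s x y := by
  have hn : ∀ (n : ℕ) (z : α), s z ((f ^ n) z) := by
    intro n
    induction n with
    | zero => intro z; simpa using s.refl' z
    | succ n ih =>
      intro z
      have : (f ^ (n + 1)) z = (f ^ n) (f z) := by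
        rw [pow_succ]
        rfl
      rw [this]
      exact s.trans' (h z) (ih (f z))
  obtain ⟨i, hi⟩ := hxy
  cases i with
  | ofNat n =>
    rw [Int.ofNat_eq_coe, zpow_natCast] at hi
    exact hi ▸ hn n x
  | negSucc n =>
    have : (f ^ (n + 1)) y = x := by
      rw [← hi, zpow_negSucc]
      simp
    exact s.symm' (this ▸ hn (n + 1) y)

theorem merge_scSetoid_mul_swap (f : Equiv.Perm α) (a b : α) :
    mergeSetoid (scSetoid (f * Equiv.swap a b)) a b = mergeSetoid (scSetoid f) a b := by
  have key : ∀ (g h : Equiv.Perm α), g = h * Equiv.swap a b →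
      mergeSetoid (scSetoid g) a b ≤ mergeSetoid (scSetoid h) a b := by
    intro g h hg
    apply mergeSetoid_le _ (mergeSetoid_rel_pair _ _ _)
    intro x y hxy
    refine sameCycle_le_setoid _ g ?_ hxy
    intro z
    by_cases hza : z = a
    · have hgz : g z = h b := by rw [hg, hza]; simp [Equiv.Perm.mul_apply]
      rw [hgz]
      refine Or.inr (Or.inl ⟨?_, (⟨1, by simp⟩ : h.SameCycle b (h b))⟩)
      rw [hza]
    · by_cases hzb : z = b
      · have hgz : g z = h a := by rw [hg, hzb]; simp [Equiv.Perm.mul_apply]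
        rw [hgz]
        refine Or.inr (Or.inr ⟨?_, (⟨1, by simp⟩ : h.SameCycle a (h a))⟩)
        rw [hzb]
      · have hgz : g z = h z := by
          rw [hg]; simp [Equiv.Perm.mul_apply, Equiv.swap_apply_of_ne_of_ne hza hzb]
        rw [hgz]
        exact Or.inl (⟨1, by simp⟩ : h.SameCycle z (h z))
  have h1 := key (f * Equiv.swap a b) f rfl
  have h2 := key f (f * Equiv.swap a b) (by rw [mul_assoc]; simp)
  exact le_antisymm h1 h2

/-- Fixed points have singleton cycles. -/
theorem sameCycle_of_fixed {f : Equiv.Perm α} {b y : α} (hb : f b = b)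
    (h : f.SameCycle b y) : y = b := by
  obtain ⟨i, hi⟩ := h
  have hinv : f⁻¹ b = b := by
    conv_lhs => rw [← hb]
    simp
  have : ∀ (i : ℤ), (f ^ i) b = b := by
    intro i
    induction i using Int.induction_on with
    | zero => simp
    | succ n ih => rw [zpow_add_one, Equiv.Perm.mul_apply, hb, ih]
    | pred n ih => rw [zpow_sub_one, Equiv.Perm.mul_apply, hinv, ih]
  rw [this i] at hi
  exact hi.symm

/-- Splitting off the point `f a` from a cycle of `f`: the number of cycles grows by one. -/
theorem card_cycles_mul_swap_apply [Finite α] (f : Equiv.Perm α) (a : α) (ha : f a ≠ a) :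
    Nat.card (Quotient (scSetoid (f * Equiv.swap a (f a)))) =
      Nat.card (Quotient (scSetoid f)) + 1 := by
  set b := f a with hb
  set f' := f * Equiv.swap a b with hf'
  have hfb : f' b = b := by rw [hf']; simp [Equiv.Perm.mul_apply, hb]
  have hab : a ≠ b := fun h => ha h.symm
  have hnf' : ¬ (scSetoid f') a b := by
    intro h
    exact hab ((sameCycle_of_fixed hfb (Equiv.Perm.SameCycle.symm h)))
  have hSf : (scSetoid f) a b := ⟨1, by simp [hb]⟩
  have e1 : Nat.card (Quotient (mergeSetoid (scSetoid f') a b)) + 1 =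
      Nat.card (Quotient (scSetoid f')) := card_quotient_mergeSetoid_add_one hnf'
  have e2 : mergeSetoid (scSetoid f') a b = mergeSetoid (scSetoid f) a b :=
    merge_scSetoid_mul_swap f a b
  have e3 : mergeSetoid (scSetoid f) a b = scSetoid f := mergeSetoid_eq_of_rel hSf
  rw [e2, e3] at e1
  omega

/-- Joining two distinct cycles by a transposition. -/
theorem sameCycle_mul_swap_of_not_sameCycle [Finite α] {f : Equiv.Perm α} {a b : α}
    (hab : a ≠ b) (h : ¬ f.SameCycle a b) : (f * Equiv.swap a b).SameCycle a b := by
  set m := Function.minimalPeriod f b with hm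
  have hbper : b ∈ Function.periodicPts f := by
    refine ⟨orderOf f, orderOf_pos f, ?_⟩
    show f^[orderOf f] b = b
    rw [Equiv.Perm.iterate_eq_pow, pow_orderOf_eq_one]; rfl
  have hmpos : 0 < m := Function.minimalPeriod_pos_of_mem_periodicPts hbper
  have key : ∀ j, 1 ≤ j → j ≤ m → ((f * Equiv.swap a b) ^ j) a = (f ^ j) b := by
    intro j h1 h2
    induction j with
    | zero => omega
    | succ j ih =>
      rcases Nat.eq_or_lt_of_le h1 with h1' | h1'
      · -- j + 1 = 1
        have : j = 0 := by omega
        subst this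
        simp [Equiv.Perm.mul_apply]
      · have hj1 : 1 ≤ j := by omega
        have hj2 : j ≤ m := by omega
        have ihj := ih hj1 hj2
        have hjm : j < m := by omega
        have hne_b : (f ^ j) b ≠ b := by
          intro hcon
          have : Function.IsPeriodicPt f j b := by
            show f^[j] b = b
            rw [Equiv.Perm.iterate_eq_pow]; exact hcon
          have := Function.IsPeriodicPt.eq_zero_of_lt_minimalPeriod this hjm
          omega
        have hne_a : (f ^ j) b ≠ a := by
          intro hcon
          exact h (Equiv.Perm.SameCycle.symm ⟨(j : ℤ), by rw [zpow_natCast]; exact hcon⟩)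
        calc ((f * Equiv.swap a b) ^ (j + 1)) a
            = (f * Equiv.swap a b) (((f * Equiv.swap a b) ^ j) a) := by
              rw [pow_succ']; rfl
          _ = f (Equiv.swap a b ((f ^ j) b)) := by rw [ihj]; rfl
          _ = f ((f ^ j) b) := by rw [Equiv.swap_apply_of_ne_of_ne hne_a hne_b]
          _ = (f ^ (j + 1)) b := by rw [pow_succ']; rfl
  have hfm : (f ^ m) b = b := by
    have h1 : (⇑f)^[m] b = b := Function.isPeriodicPt_minimalPeriod (⇑f) b
    rw [Equiv.Perm.iterate_eq_pow] at h1
    exact h1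
  exact ⟨(m : ℤ), by rw [zpow_natCast, key m hmpos le_rfl, hfm]⟩

theorem card_cycles_mul_swap_le [Finite α] (f : Equiv.Perm α) (a b : α) :
    Nat.card (Quotient (scSetoid (f * Equiv.swap a b))) ≤
      Nat.card (Quotient (scSetoid f)) + 1 := by
  calc Nat.card (Quotient (scSetoid (f * Equiv.swap a b)))
      ≤ Nat.card (Quotient (mergeSetoid (scSetoid (f * Equiv.swap a b)) a b)) + 1 :=
        card_quotient_le_mergeSetoid_add_one _ _ _
    _ = Nat.card (Quotient (mergeSetoid (scSetoid f) a b)) + 1 := by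
        rw [merge_scSetoid_mul_swap]
    _ ≤ Nat.card (Quotient (scSetoid f)) + 1 := by
        have := card_quotient_mergeSetoid_le (scSetoid f) a b; omega

theorem card_cycles_mul_swap_of_not_sameCycle [Finite α] {f : Equiv.Perm α} {a b : α}
    (hab : a ≠ b) (h : ¬ f.SameCycle a b) :
    Nat.card (Quotient (scSetoid (f * Equiv.swap a b))) + 1 =
      Nat.card (Quotient (scSetoid f)) := by
  have hsc : (f * Equiv.swap a b).SameCycle a b := sameCycle_mul_swap_of_not_sameCycle hab h
  have e3 : mergeSetoid (scSetoid (f * Equiv.swap a b)) a b = scSetoid (f * Equiv.swap a b) :=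
    mergeSetoid_eq_of_rel hsc
  have e1 : Nat.card (Quotient (mergeSetoid (scSetoid f) a b)) + 1 =
      Nat.card (Quotient (scSetoid f)) := card_quotient_mergeSetoid_add_one h
  rw [← merge_scSetoid_mul_swap, e3] at e1
  exact e1

end GreenAux

namespace GreenAux2
open Equiv GreenAux

variable {α : Type*}

/-- The connectivity setoid of a pair of permutations. -/
def connSetoid (g h : Equiv.Perm α) : Setoid α :=
  Relation.EqvGen.setoid (fun x y => g x = y ∨ h x = y)

theorem connSetoid_rel_g (g h : Equiv.Perm α) (x : α) : connSetoid g h x (g x) :=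
  Relation.EqvGen.rel _ _ (Or.inl rfl)

theorem connSetoid_rel_h (g h : Equiv.Perm α) (x : α) : connSetoid g h x (h x) :=
  Relation.EqvGen.rel _ _ (Or.inr rfl)

theorem connSetoid_one (g : Equiv.Perm α) : connSetoid g 1 = scSetoid g := by
  apply le_antisymm
  · apply Setoid.eqvGen_le
    rintro x y (h | h)
    · exact ⟨1, by simpa using h⟩
    · exact ⟨0, by simpa using h⟩
  · intro x y hxy
    exact sameCycle_le_setoid _ g (fun z => connSetoid_rel_g g 1 z) hxy

theorem card_quotient_scSetoid_one [Finite α] :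
    Nat.card (Quotient (scSetoid (1 : Equiv.Perm α))) = Nat.card α := by
  refine (Nat.card_eq_of_bijective (Quotient.mk (scSetoid (1 : Equiv.Perm α))) ⟨?_, ?_⟩).symm
  · intro x y hxy
    obtain ⟨i, hi⟩ := Quotient.exact hxy
    simpa using hi
  · intro q
    induction q using Quotient.inductionOn with
    | h x => exact ⟨x, rfl⟩

open scoped Classical in
/-- The genus inequality for a pair of permutations ("Euler's inequality"). -/
theorem master [Fintype α] (g h : Equiv.Perm α) :
    Nat.card (Quotient (scSetoid g)) + Nat.card (Quotient (scSetoid h)) +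
      Nat.card (Quotient (scSetoid (g * h))) ≤
    Nat.card α + 2 * Nat.card (Quotient (connSetoid g h)) := by
  -- strong induction on the support of h
  suffices H : ∀ (N : ℕ) (g h : Equiv.Perm α), h.support.card ≤ N →
      Nat.card (Quotient (scSetoid g)) + Nat.card (Quotient (scSetoid h)) +
        Nat.card (Quotient (scSetoid (g * h))) ≤
      Nat.card α + 2 * Nat.card (Quotient (connSetoid g h)) from
    H h.support.card g h le_rfl
  intro N
  induction N with
  | zero =>
    intro g h hN
    have h1 : h = 1 := by
      rw [← Equiv.Perm.support_eq_empty_iff, ← Finset.card_eq_zero]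
      omega
    subst h1
    rw [connSetoid_one, card_quotient_scSetoid_one, mul_one]
    omega
  | succ N ih =>
    intro g h hN
    by_cases h1 : h = 1
    · subst h1
      rw [connSetoid_one, card_quotient_scSetoid_one, mul_one]
      omega
    obtain ⟨a, ha⟩ : ∃ a, h a ≠ a := by
      by_contra hcon
      push_neg at hcon
      exact h1 (Equiv.ext fun x => by rw [hcon x]; rfl)
    set b := h a with hb
    have hab : a ≠ b := fun hc => ha hc.symm
    set h' := h * Equiv.swap a b with hh'
    -- support of h' is strictly smaller
    have hsub : h'.support ⊆ h.support := by
      intro x hx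
      rw [Equiv.Perm.mem_support] at hx ⊢
      intro hfix
      apply hx
      have hxa : x ≠ a := by
        intro hc
        rw [hc] at hfix
        exact ha hfix
      by_cases hxb : x = b
      · rw [hh', hxb]
        simp [Equiv.Perm.mul_apply, ← hb]
      · rw [hh']
        simp [Equiv.Perm.mul_apply, Equiv.swap_apply_of_ne_of_ne hxa hxb, hfix]
    have hbsupp : b ∈ h.support := by
      rw [Equiv.Perm.mem_support]
      intro hc
      exact ha (h.injective (hb ▸ hc))
    have hbnot : b ∉ h'.support := by
      rw [Equiv.Perm.mem_support]
      simp [hh', Equiv.Perm.mul_apply, ← hb]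
    have hcard : h'.support.card ≤ N := by
      have : h'.support ⊂ h.support := ⟨hsub, fun hcon => hbnot (hcon hbsupp)⟩
      have := Finset.card_lt_card this
      omega
    have IH := ih g h' hcard
    have ch' : Nat.card (Quotient (scSetoid h')) = Nat.card (Quotient (scSetoid h)) + 1 :=
      card_cycles_mul_swap_apply h a ha
    have hs2 : Equiv.swap a b * Equiv.swap a b = 1 := by
      rw [Equiv.swap_mul_self]
    have hhh : h = h' * Equiv.swap a b := by
      rw [hh', mul_assoc, hs2, mul_one]
    have hk : g * h = (g * h') * Equiv.swap a b := by
      rw [hhh, ← mul_assoc]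
    by_cases hSC : (g * h').SameCycle a b
    · -- split case
      have hck : Nat.card (Quotient (scSetoid (g * h))) ≤
          Nat.card (Quotient (scSetoid (g * h'))) + 1 := by
        rw [hk]; exact card_cycles_mul_swap_le _ a b
      -- conn g h ≤ conn g h'
      have cab : connSetoid g h' a b := by
        refine sameCycle_le_setoid _ (g * h') (fun z => ?_) hSC
        exact (connSetoid g h').trans' (connSetoid_rel_h g h' z) (connSetoid_rel_g g h' (h' z))
      have hle : connSetoid g h ≤ connSetoid g h' := by
        apply Setoid.eqvGen_le
        rintro x y (hxy | hxy)
        · exact hxy ▸ connSetoid_rel_g g h' x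
        · by_cases hxa : x = a
          · rw [← hxy, hxa, ← hb]
            exact cab
          · by_cases hxb : x = b
            · have : h x = h' a := by
                rw [hh', hxb]
                simp [Equiv.Perm.mul_apply]
              rw [← hxy, this, hxb]
              exact (connSetoid g h').trans' ((connSetoid g h').symm' cab)
                (connSetoid_rel_h g h' a)
            · have : h x = h' x := by
                rw [hh']
                simp [Equiv.Perm.mul_apply, Equiv.swap_apply_of_ne_of_ne hxa hxb]
              rw [← hxy, this]
              exact connSetoid_rel_h g h' x
      have ht : Nat.card (Quotient (connSetoid g h')) ≤ Nat.card (Quotient (connSetoid g h)) :=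
        card_quotient_le_of_le hle
      omega
    · -- join case
      have hck : Nat.card (Quotient (scSetoid (g * h))) + 1 =
          Nat.card (Quotient (scSetoid (g * h'))) := by
        rw [hk]
        exact card_cycles_mul_swap_of_not_sameCycle hab hSC
      have hle : connSetoid g h ≤ mergeSetoid (connSetoid g h') a b := by
        apply Setoid.eqvGen_le
        rintro x y (hxy | hxy)
        · exact Or.inl (hxy ▸ connSetoid_rel_g g h' x)
        · by_cases hxa : x = a
          · rw [← hxy, hxa, ← hb]
            exact Or.inr (Or.inl ⟨(connSetoid g h').refl' a, (connSetoid g h').refl' b⟩)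
          · by_cases hxb : x = b
            · have : h x = h' a := by
                rw [hh', hxb]
                simp [Equiv.Perm.mul_apply]
              rw [← hxy, this, hxb]
              exact Or.inr (Or.inr ⟨(connSetoid g h').refl' b, connSetoid_rel_h g h' a⟩)
            · have : h x = h' x := by
                rw [hh']
                simp [Equiv.Perm.mul_apply, Equiv.swap_apply_of_ne_of_ne hxa hxb]
              rw [← hxy, this]
              exact Or.inl (connSetoid_rel_h g h' x)
      have ht1 : Nat.card (Quotient (mergeSetoid (connSetoid g h') a b)) ≤
          Nat.card (Quotient (connSetoid g h)) := card_quotient_le_of_le hle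
      have ht2 : Nat.card (Quotient (connSetoid g h')) ≤
          Nat.card (Quotient (mergeSetoid (connSetoid g h') a b)) + 1 :=
        card_quotient_le_mergeSetoid_add_one _ _ _
      omega

end GreenAux2

namespace GreenAux3
open Equiv GreenAux GreenAux2

variable {α : Type*}

open scoped Classical in
/-- An involution without fixed points has `n/2` orbits. -/
theorem card_involution [Fintype α] (σ : Equiv.Perm α) (hinv : ∀ x, σ (σ x) = x)
    (hnf : ∀ x, σ x ≠ x) :
    Nat.card α = 2 * Nat.card (Quotient (scSetoid σ)) := by
  have hσ2 : σ * σ = 1 := Equiv.ext fun x => by simp [Equiv.Perm.mul_apply, hinv x]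
  have hσinv : σ⁻¹ = σ := by
    rw [eq_comm, eq_inv_iff_mul_eq_one, hσ2]
  have hpow : ∀ n : ℕ, σ ^ n = 1 ∨ σ ^ n = σ := by
    intro n
    induction n with
    | zero => exact Or.inl rfl
    | succ n ih =>
      rcases ih with h | h
      · rw [pow_succ, h, one_mul]; exact Or.inr rfl
      · rw [pow_succ, h, hσ2]; exact Or.inl rfl
  have hchar : ∀ x y : α, σ.SameCycle x y ↔ (x = y ∨ x = σ y) := by
    intro x y
    constructor
    · rintro ⟨i, hi⟩
      have hz : σ ^ i = 1 ∨ σ ^ i = σ := by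
        cases i with
        | ofNat n => rw [Int.ofNat_eq_coe, zpow_natCast]; exact hpow n
        | negSucc n =>
          rw [zpow_negSucc]
          rcases hpow (n + 1) with h | h
          · rw [h]; exact Or.inl inv_one
          · rw [h, hσinv]; exact Or.inr rfl
      rcases hz with h | h
      · rw [h] at hi; left; simpa using hi
      · rw [h] at hi
        right
        rw [← hi, hinv]
    · rintro (rfl | rfl)
      · exact ⟨0, by simp⟩
      · exact ⟨-1, by rw [zpow_neg_one]; exact σ.symm_apply_apply y⟩
  have hfib : ∀ q : Quotient (scSetoid σ),
      Nat.card {x // Quotient.mk (scSetoid σ) x = q} = 2 := by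
    intro q
    induction q using Quotient.inductionOn with
    | h y =>
      have he : {x // Quotient.mk (scSetoid σ) x = Quotient.mk (scSetoid σ) y} ≃
          {x // x = y ∨ x = σ y} := by
        apply Equiv.subtypeEquivRight
        intro x
        rw [Quotient.eq]
        exact hchar x y
      rw [Nat.card_congr he]
      have hb : Function.Bijective (fun b : Bool =>
          (if b then ⟨σ y, Or.inr rfl⟩ else ⟨y, Or.inl rfl⟩ : {x // x = y ∨ x = σ y})) := by
        constructor
        · intro b c hbc
          have hval := congrArg Subtype.val hbc
          cases b <;> cases c
          · rfl
          · exact absurd ((by simpa using hval) : y = σ y).symm (hnf y)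
          · exact absurd ((by simpa using hval.symm) : y = σ y).symm (hnf y)
          · rfl
        · rintro ⟨x, (rfl | rfl)⟩
          · exact ⟨false, rfl⟩
          · exact ⟨true, rfl⟩
      rw [← Nat.card_eq_of_bijective _ hb]
      simp
  calc Nat.card α
      = Nat.card (Σ q : Quotient (scSetoid σ), {x // Quotient.mk (scSetoid σ) x = q}) :=
        Nat.card_congr (Equiv.sigmaFiberEquiv (Quotient.mk (scSetoid σ))).symm
    _ = 2 * Nat.card (Quotient (scSetoid σ)) := by
        rw [Nat.card_eq_fintype_card, Fintype.card_sigma, Nat.card_eq_fintype_card]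
        have hfib' : ∀ q : Quotient (scSetoid σ),
            Fintype.card {x // Quotient.mk (scSetoid σ) x = q} = 2 := by
          intro q; rw [← Nat.card_eq_fintype_card]; exact hfib q
        simp only [hfib']
        rw [Finset.sum_const, Finset.card_univ, smul_eq_mul, mul_comm]

open scoped Classical in
/-- A permutation with exactly two orbits, witnessed by two non-equivalent elements
whose orbits cover everything. -/
theorem card_quotient_eq_two [Finite α] {f : Equiv.Perm α} {w₁ w₂ : α}
    (hdist : ¬ f.SameCycle w₁ w₂) (hall : ∀ x, f.SameCycle w₁ x ∨ f.SameCycle w₂ x) :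
    Nat.card (Quotient (scSetoid f)) = 2 := by
  have hb : Function.Bijective ((Quotient.lift
      (fun x => if f.SameCycle w₁ x then true else false)
      (fun x y (hxy : (scSetoid f) x y) => by
        by_cases h : f.SameCycle w₁ x
        · simp [h, h.trans hxy]
        · have h2 : ¬ f.SameCycle w₁ y := fun hy => h (hy.trans hxy.symm)
          simp [h, h2])) : Quotient (scSetoid f) → Bool) := by
    constructor
    · intro q q'
      induction q using Quotient.inductionOn with
      | h x =>
        induction q' using Quotient.inductionOn with
        | h y =>
          intro hxy
          simp only [Quotient.lift_mk] at hxy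
          by_cases hx : f.SameCycle w₁ x
          · by_cases hy : f.SameCycle w₁ y
            · exact Quotient.sound (hx.symm.trans hy)
            · simp [hx, hy] at hxy
          · by_cases hy : f.SameCycle w₁ y
            · simp [hx, hy] at hxy
            · have hx2 := (hall x).resolve_left hx
              have hy2 := (hall y).resolve_left hy
              exact Quotient.sound (hx2.symm.trans hy2)
    · intro b
      cases b
      · refine ⟨Quotient.mk _ w₂, ?_⟩
        simp [hdist]
      · refine ⟨Quotient.mk _ w₁, ?_⟩
        simp [Equiv.Perm.SameCycle.refl]
  rw [Nat.card_eq_of_bijective _ hb]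
  simp

end GreenAux3

namespace GreenAux4
open Equiv GreenAux GreenAux2 GreenAux3

variable {H : Type}

theorem scSetoid_eq (π : Equiv.Perm H) : scSetoid π = sameCycleSetoid π := rfl

theorem step_eq_mul (G : RibbonGraph H) : G.step = G.sigma * G.rho := rfl

/-- Non-bridgeness is invariant under `sigma`. -/
theorem not_isBridge_sigma (G : RibbonGraph H) {x : H} (h : ¬ G.IsBridge x) :
    ¬ G.IsBridge (G.sigma x) := by
  unfold RibbonGraph.IsBridge at h ⊢
  rw [not_not] at h ⊢
  have hsymm : Symmetric (fun a b =>
      G.rho a = b ∨ G.rho b = a ∨ (G.sigma a = b ∧ a ≠ x ∧ a ≠ G.sigma x)) := by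
    rintro a b (hab | hab | ⟨hab, ha1, ha2⟩)
    · exact Or.inr (Or.inl hab)
    · exact Or.inl hab
    · refine Or.inr (Or.inr ⟨by rw [← hab, G.invol], ?_, ?_⟩)
      · intro hc
        apply ha2
        rw [← hab] at hc
        have h2 := congrArg G.sigma hc
        rw [G.invol] at h2
        exact h2
      · intro hc
        apply ha1
        rw [← hab] at hc
        exact G.sigma.injective hc
  have hrev : Relation.ReflTransGen (fun a b =>
      G.rho a = b ∨ G.rho b = a ∨ (G.sigma a = b ∧ a ≠ x ∧ a ≠ G.sigma x)) (G.sigma x) x :=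
    @Std.Symm.symm _ _ (@Relation.ReflTransGen.stdSymm _ _ ⟨fun _ _ hab => hsymm hab⟩) _ _ h
  have hgoal : Relation.ReflTransGen (fun a b =>
      G.rho a = b ∨ G.rho b = a ∨ (G.sigma a = b ∧ a ≠ G.sigma x ∧ a ≠ x)) (G.sigma x) x := by
    refine Relation.ReflTransGen.mono ?_ _ _ hrev
    rintro a b (hab | hab | ⟨hab, ha1, ha2⟩)
    · exact Or.inl hab
    · exact Or.inr (Or.inl hab)
    · exact Or.inr (Or.inr ⟨hab, ha2, ha1⟩)
  simp only [G.invol]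
  exact hgoal

/-- **Key lemma**: in a connected unicyclic ribbon graph with two faces, a non-bridge
half-edge is never on the same face as its partner. -/
theorem nonbridge_not_sameCycle [Fintype H] (G : RibbonGraph H)
    (huni : G.numEdges = G.numVertices)
    {w₁ w₂ : H} (hdist : ¬ G.step.SameCycle w₁ w₂)
    (hall : ∀ x, G.step.SameCycle w₁ x ∨ G.step.SameCycle w₂ x)
    {x₀ : H} (hnb : ¬ G.IsBridge x₀) : ¬ G.step.SameCycle x₀ (G.sigma x₀) := by
  classical
  intro hsc
  have hx0y0 : x₀ ≠ G.sigma x₀ := fun h => G.noFix x₀ h.symm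
  set φ := G.step with hφ
  set a₁ := G.rho⁻¹ x₀ with ha₁
  set b₁ := G.rho⁻¹ (G.sigma x₀) with hb₁
  have ha₁b₁ : a₁ ≠ b₁ := by
    intro h
    apply hx0y0
    rw [ha₁, hb₁] at h
    simpa using congrArg G.rho h
  have hφapp : ∀ z, φ z = G.sigma (G.rho z) := fun z => rfl
  have hphia : φ a₁ = G.sigma x₀ := by rw [hφapp, ha₁]; simp
  have hphib : φ b₁ = x₀ := by rw [hφapp, hb₁]; simp [G.invol]
  have hscab : φ.SameCycle a₁ b₁ := by
    have h1 : φ.SameCycle a₁ (G.sigma x₀) := ⟨1, by simpa using hphia⟩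
    have h2 : φ.SameCycle b₁ x₀ := ⟨1, by simpa using hphib⟩
    exact (h1.trans hsc.symm).trans h2.symm
  have hsw : Equiv.swap a₁ b₁ = G.rho⁻¹ * Equiv.swap x₀ (G.sigma x₀) * G.rho := by
    have := Equiv.swap_apply_apply G.rho⁻¹ x₀ (G.sigma x₀)
    rw [inv_inv] at this
    exact this
  have hconj : (G.sigma * Equiv.swap x₀ (G.sigma x₀)) * G.rho = φ * Equiv.swap a₁ b₁ := by
    rw [hφ, step_eq_mul, hsw]
    group
  -- at least two faces after cutting the edge
  have hgeq : 2 ≤ Nat.card (Quotient (scSetoid ((G.sigma * Equiv.swap x₀ (G.sigma x₀)) * G.rho))) := by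
    rw [hconj]
    have e2 := merge_scSetoid_mul_swap φ a₁ b₁
    have e3 : mergeSetoid (scSetoid φ) a₁ b₁ = scSetoid φ := mergeSetoid_eq_of_rel hscab
    have e4 := card_quotient_mergeSetoid_le (scSetoid (φ * Equiv.swap a₁ b₁)) a₁ b₁
    rw [e2, e3] at e4
    have h2 : Nat.card (Quotient (scSetoid φ)) = 2 := card_quotient_eq_two hdist hall
    omega
  -- the cut sigma has one more orbit
  have hcs : Nat.card (Quotient (scSetoid (G.sigma * Equiv.swap x₀ (G.sigma x₀)))) =
      Nat.card (Quotient (scSetoid G.sigma)) + 1 :=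
    card_cycles_mul_swap_apply G.sigma x₀ (G.noFix x₀)
  -- the cut graph is still connected
  set σ' := G.sigma * Equiv.swap x₀ (G.sigma x₀) with hσ'
  have hstep0 : ∀ a b : H,
      (G.rho a = b ∨ G.rho b = a ∨ (G.sigma a = b ∧ a ≠ x₀ ∧ a ≠ G.sigma x₀)) →
      connSetoid σ' G.rho a b := by
    rintro a b (h | h | ⟨h, h1, h2⟩)
    · exact h ▸ connSetoid_rel_h σ' G.rho a
    · exact (connSetoid σ' G.rho).symm' (h ▸ connSetoid_rel_h σ' G.rho b)
    · have hval : σ' a = b := by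
        rw [hσ', Equiv.Perm.mul_apply, Equiv.swap_apply_of_ne_of_ne h1 h2]
        exact h
      exact hval ▸ connSetoid_rel_g σ' G.rho a
  have hpath := not_not.mp hnb
  have hgen : ∀ z : H, Relation.ReflTransGen
      (fun a b => G.rho a = b ∨ G.rho b = a ∨ (G.sigma a = b ∧ a ≠ x₀ ∧ a ≠ G.sigma x₀))
      x₀ z → connSetoid σ' G.rho x₀ z := by
    intro z hz
    induction hz with
    | refl => exact (connSetoid σ' G.rho).refl' x₀
    | tail hst h ih => exact (connSetoid σ' G.rho).trans' ih (hstep0 _ _ h)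
  have hx0y0conn : connSetoid σ' G.rho x₀ (G.sigma x₀) := hgen _ hpath
  have hconn1 : ∀ u v : H, connSetoid σ' G.rho u v := by
    intro u v
    have hc := G.conn u v
    induction hc with
    | rel p q hpq =>
      rcases hpq with hpq | hpq
      · by_cases hp : p = x₀
        · rw [← hpq, hp]
          exact hx0y0conn
        · by_cases hp2 : p = G.sigma x₀
          · rw [← hpq, hp2, G.invol]
            exact (connSetoid σ' G.rho).symm' hx0y0conn
          · have hval : σ' p = G.sigma p := by
              rw [hσ', Equiv.Perm.mul_apply, Equiv.swap_apply_of_ne_of_ne hp hp2]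
            rw [← hpq, ← hval]
            exact connSetoid_rel_g σ' G.rho p
      · exact hpq ▸ connSetoid_rel_h σ' G.rho p
    | refl p => exact (connSetoid σ' G.rho).refl' p
    | symm p q _ ih => exact (connSetoid σ' G.rho).symm' ih
    | trans p q r _ _ ih1 ih2 => exact (connSetoid σ' G.rho).trans' ih1 ih2
  have ht : Nat.card (Quotient (connSetoid σ' G.rho)) = 1 := by
    haveI : Subsingleton (Quotient (connSetoid σ' G.rho)) := by
      constructor
      intro q q'
      induction q using Quotient.inductionOn with
      | h u =>
        induction q' using Quotient.inductionOn with
        | h v => exact Quotient.sound (hconn1 u v)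
    haveI : Nonempty (Quotient (connSetoid σ' G.rho)) := ⟨Quotient.mk _ x₀⟩
    exact Nat.card_unique
  have hmaster := master σ' G.rho
  rw [ht] at hmaster
  have hE : Nat.card H = 2 * Nat.card (Quotient (scSetoid G.sigma)) :=
    card_involution G.sigma G.invol G.noFix
  have hV : Nat.card (Quotient (scSetoid G.rho)) = Nat.card (Quotient (scSetoid G.sigma)) := by
    rw [scSetoid_eq, scSetoid_eq]
    exact huni.symm
  omega

end GreenAux4

namespace GreenAux5
open Equiv GreenAux GreenAux2 GreenAux3 GreenAux4

variable {α : Type*}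

/-- The size of the cycle of `x` equals the minimal period of `x`. -/
theorem card_sameCycle_eq_minimalPeriod [Fintype α] (f : Equiv.Perm α) (x : α) :
    Nat.card {y // f.SameCycle x y} = Function.minimalPeriod (⇑f) x := by
  classical
  set m := Function.minimalPeriod (⇑f) x with hm
  have hper : x ∈ Function.periodicPts (⇑f) := by
    refine ⟨orderOf f, orderOf_pos f, ?_⟩
    show (⇑f)^[orderOf f] x = x
    rw [Equiv.Perm.iterate_eq_pow, pow_orderOf_eq_one]
    rfl
  have hmpos : 0 < m := Function.minimalPeriod_pos_of_mem_periodicPts hper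
  have hperm : (⇑f)^[m] x = x := Function.isPeriodicPt_minimalPeriod (⇑f) x
  have hFbij : Function.Bijective
      (fun j : Fin m => (⟨(f ^ (j : ℕ)) x, ⟨(j : ℕ), by rw [zpow_natCast]⟩⟩ :
        {y // f.SameCycle x y})) := by
    constructor
    · intro i j hij
      have hval : (⇑f)^[(i : ℕ)] x = (⇑f)^[(j : ℕ)] x := by
        rw [Equiv.Perm.iterate_eq_pow, Equiv.Perm.iterate_eq_pow]
        exact congrArg Subtype.val hij
      have := Function.iterate_injOn_Iio_minimalPeriod (f := ⇑f) (x := x)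
        (Set.mem_Iio.mpr i.2) (Set.mem_Iio.mpr j.2) hval
      exact Fin.ext this
    · rintro ⟨y, hy⟩
      obtain ⟨i, _, hiy⟩ := hy.exists_pow_eq'
      refine ⟨⟨i % m, Nat.mod_lt _ hmpos⟩, ?_⟩
      apply Subtype.ext
      show (f ^ (i % m)) x = y
      have h1 : (⇑f)^[i] x = y := by rw [Equiv.Perm.iterate_eq_pow]; exact hiy
      have h2 : (⇑f)^[i % m] x = (⇑f)^[i] x :=
        (Function.isPeriodicPt_minimalPeriod (⇑f) x).iterate_mod_apply i
      rw [← Equiv.Perm.iterate_eq_pow, h2, h1]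
  calc Nat.card {y // f.SameCycle x y} = Nat.card (Fin m) :=
        (Nat.card_eq_of_bijective _ hFbij).symm
    _ = m := by simp

/-- Integer periods are multiples of the minimal period. -/
theorem minimalPeriod_int_dvd [Fintype α] (f : Equiv.Perm α) (x : α) {i : ℤ}
    (hi : (f ^ i) x = x) : (Function.minimalPeriod (⇑f) x : ℤ) ∣ i := by
  classical
  set m := Function.minimalPeriod (⇑f) x with hm
  have hper : x ∈ Function.periodicPts (⇑f) := by
    refine ⟨orderOf f, orderOf_pos f, ?_⟩
    show (⇑f)^[orderOf f] x = x
    rw [Equiv.Perm.iterate_eq_pow, pow_orderOf_eq_one]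
    rfl
  have hmpos : 0 < m := Function.minimalPeriod_pos_of_mem_periodicPts hper
  have hfixm : (f ^ (m : ℤ)) x = x := by
    rw [zpow_natCast, ← Equiv.Perm.iterate_eq_pow]
    exact Function.isPeriodicPt_minimalPeriod (⇑f) x
  -- every integer power of f^m fixes x
  have hfixmul : ∀ q : ℤ, (f ^ ((m : ℤ) * q)) x = x := by
    have hfixinv : (f ^ (-(m : ℤ))) x = x := by
      rw [zpow_neg]
      conv_lhs => rw [← hfixm]
      simp
    intro q
    induction q using Int.induction_on with
    | zero => simp
    | succ n ih =>
      rw [mul_add, mul_one, zpow_add, Equiv.Perm.mul_apply, hfixm, ih]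
    | pred n ih =>
      rw [mul_sub, mul_one, sub_eq_add_neg, zpow_add, Equiv.Perm.mul_apply, hfixinv, ih]
  set r := i % (m : ℤ) with hr
  have h0r : 0 ≤ r := Int.emod_nonneg i (by exact_mod_cast hmpos.ne')
  have hrm : r < (m : ℤ) := Int.emod_lt_of_pos i (by exact_mod_cast hmpos)
  have hir : i = (m : ℤ) * (i / (m : ℤ)) + r := (Int.mul_ediv_add_emod i (m : ℤ)).symm
  have hfr : (f ^ r) x = x := by
    have h3 : f ^ i = f ^ (r + (m : ℤ) * (i / (m : ℤ))) := by
      congr 1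
      nth_rewrite 1 [hir]
      exact add_comm _ _
    have h4 : (f ^ i) x = (f ^ r) ((f ^ ((m : ℤ) * (i / (m : ℤ)))) x) := by
      rw [h3, zpow_add, Equiv.Perm.mul_apply]
    rw [hfixmul, hi] at h4
    exact h4.symm
  have : r.toNat < m := by omega
  have hfrn : (⇑f)^[r.toNat] x = x := by
    rw [Equiv.Perm.iterate_eq_pow]
    have : ((r.toNat : ℤ)) = r := Int.toNat_of_nonneg h0r
    rw [show ((f ^ r.toNat : Equiv.Perm α)) = f ^ r by rw [← zpow_natCast, this]]
    exact hfr
  have hz : r.toNat = 0 :=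
    Function.IsPeriodicPt.eq_zero_of_lt_minimalPeriod hfrn this
  have hr0 : r = 0 := by omega
  rw [hr] at hr0
  exact Int.dvd_of_emod_eq_zero hr0

/-- Generic subtype splitting for `Nat.card`. -/
theorem card_subtype_split [Fintype α] (P Q : α → Prop) :
    Nat.card {x // P x} = Nat.card {x // Q x ∧ P x} + Nat.card {x // ¬ Q x ∧ P x} := by
  classical
  calc Nat.card {x // P x}
      = Nat.card ({z : {x // P x} // Q z.1} ⊕ {z : {x // P x} // ¬ Q z.1}) :=
        (Nat.card_congr (Equiv.sumCompl _)).symm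
    _ = Nat.card {z : {x // P x} // Q z.1} + Nat.card {z : {x // P x} // ¬ Q z.1} :=
        Nat.card_sum
    _ = Nat.card {x // Q x ∧ P x} + Nat.card {x // ¬ Q x ∧ P x} := by
        have e1 : Nat.card {z : {x // P x} // Q z.1} = Nat.card {x // Q x ∧ P x} :=
          Nat.card_congr ((Equiv.subtypeSubtypeEquivSubtypeInter P Q).trans
            (Equiv.subtypeEquivRight (fun x => and_comm)))
        have e2 : Nat.card {z : {x // P x} // ¬ Q z.1} = Nat.card {x // ¬ Q x ∧ P x} :=
          Nat.card_congr ((Equiv.subtypeSubtypeEquivSubtypeInter P (fun x => ¬ Q x)).trans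
            (Equiv.subtypeEquivRight (fun x => and_comm)))
        rw [e1, e2]

end GreenAux5


/-- Let `G` be a ribbon graph with a unique cycle, of even length `l`
(so `G` is connected and unicyclic, and the non-bridge edges — the edges of the
cycle — account for `2 * l` half-edges).  `G` has exactly two distinct Green walks,
with representatives `w₁` (the inside) and `w₂` (the outside); suppose `n₁` of the
tree (bridge) edges have their half-edges on the walk of `w₁` and `n₂` on the walk
of `w₂`.  Then `G` has exactly four distinct double-stepped Green walks: two of
length `l / 2 + n₁` (those inside the walk of `w₁`) and two of length `l / 2 + n₂`
(those inside the walk of `w₂`). -/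
theorem unicyclic_even_double_stepped_green_walks
    (H : Type) [Fintype H] (G : RibbonGraph H) (l n₁ n₂ : ℕ) (heven : Even l) (hl : 0 < l)
    (hunicyclic : G.numEdges = G.numVertices)
    (hcyc : Nat.card {x : H // ¬ G.IsBridge x} = 2 * l)
    (w₁ w₂ : H)
    (hdist : ¬ G.step.SameCycle w₁ w₂)
    (hall : ∀ x : H, G.step.SameCycle w₁ x ∨ G.step.SameCycle w₂ x)
    (hin : Nat.card {x : H // G.IsBridge x ∧ G.step.SameCycle w₁ x} = 2 * n₁)
    (hout : Nat.card {x : H // G.IsBridge x ∧ G.step.SameCycle w₂ x} = 2 * n₂) :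
    Nat.card (Quotient (sameCycleSetoid (G.step ^ 2))) = 4 ∧
      (∀ x : H, G.step.SameCycle w₁ x →
        Function.minimalPeriod (⇑(G.step ^ 2)) x = l / 2 + n₁) ∧
      (∀ x : H, G.step.SameCycle w₂ x →
        Function.minimalPeriod (⇑(G.step ^ 2)) x = l / 2 + n₂) := by
  classical
  obtain ⟨d, hd⟩ := heven
  set f := G.step with hf
  -- key lemma
  have hkey : ∀ x : H, ¬ G.IsBridge x → ¬ f.SameCycle x (G.sigma x) :=
    fun x hx => GreenAux4.nonbridge_not_sameCycle G hunicyclic hdist hall hx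
  have hswap12 : ∀ x : H, ¬ G.IsBridge x → f.SameCycle w₁ x → f.SameCycle w₂ (G.sigma x) := by
    intro x hx h1
    rcases hall (G.sigma x) with h | h
    · exact absurd (h1.symm.trans h) (hkey x hx)
    · exact h
  have hswap21 : ∀ x : H, ¬ G.IsBridge x → f.SameCycle w₂ x → f.SameCycle w₁ (G.sigma x) := by
    intro x hx h2
    rcases hall (G.sigma x) with h | h
    · exact h
    · exact absurd (h2.symm.trans h) (hkey x hx)
  have hebij : Nat.card {x : H // ¬ G.IsBridge x ∧ f.SameCycle w₁ x} =
      Nat.card {x : H // ¬ G.IsBridge x ∧ f.SameCycle w₂ x} := by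
    refine Nat.card_congr
      ⟨fun z => ⟨G.sigma z.1, GreenAux4.not_isBridge_sigma G z.2.1, hswap12 z.1 z.2.1 z.2.2⟩,
       fun z => ⟨G.sigma z.1, GreenAux4.not_isBridge_sigma G z.2.1, hswap21 z.1 z.2.1 z.2.2⟩,
       ?_, ?_⟩
    · rintro ⟨x, hx⟩
      exact Subtype.ext (G.invol x)
    · rintro ⟨x, hx⟩
      exact Subtype.ext (G.invol x)
  -- the non-bridge halves split evenly between the two faces
  have hnb1 : Nat.card {x : H // ¬ G.IsBridge x ∧ f.SameCycle w₁ x} = l := by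
    have hsplit := GreenAux5.card_subtype_split (fun x : H => ¬ G.IsBridge x)
      (fun x => f.SameCycle w₁ x)
    have e₁ : Nat.card {x : H // f.SameCycle w₁ x ∧ ¬ G.IsBridge x} =
        Nat.card {x : H // ¬ G.IsBridge x ∧ f.SameCycle w₁ x} :=
      Nat.card_congr (Equiv.subtypeEquivRight (fun x => and_comm))
    have e₂ : Nat.card {x : H // ¬ f.SameCycle w₁ x ∧ ¬ G.IsBridge x} =
        Nat.card {x : H // ¬ G.IsBridge x ∧ f.SameCycle w₂ x} := by
      refine Nat.card_congr (Equiv.subtypeEquivRight (fun x => ?_))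
      constructor
      · rintro ⟨h1, h2⟩
        exact ⟨h2, (hall x).resolve_left h1⟩
      · rintro ⟨h1, h2⟩
        exact ⟨fun hc => hdist (hc.trans h2.symm), h1⟩
    rw [hcyc, e₁, e₂] at hsplit
    omega
  have hnb2 : Nat.card {x : H // ¬ G.IsBridge x ∧ f.SameCycle w₂ x} = l := by
    rw [← hebij]; exact hnb1
  -- the sizes of the two faces
  have hA : Nat.card {x : H // f.SameCycle w₁ x} = l + 2 * n₁ := by
    have hsplit := GreenAux5.card_subtype_split (fun x : H => f.SameCycle w₁ x)
      (fun x => G.IsBridge x)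
    rw [hin, hnb1] at hsplit
    omega
  have hB : Nat.card {x : H // f.SameCycle w₂ x} = l + 2 * n₂ := by
    have hsplit := GreenAux5.card_subtype_split (fun x : H => f.SameCycle w₂ x)
      (fun x => G.IsBridge x)
    rw [hout, hnb2] at hsplit
    omega
  -- minimal periods on the faces
  have hper1 : ∀ x : H, f.SameCycle w₁ x → Function.minimalPeriod (⇑f) x = l + 2 * n₁ := by
    intro x hx
    rw [← GreenAux5.card_sameCycle_eq_minimalPeriod f x, ← hA]
    exact Nat.card_congr (Equiv.subtypeEquivRight
      (fun y => ⟨fun h => hx.trans h, fun h => hx.symm.trans h⟩))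
  have hper2 : ∀ x : H, f.SameCycle w₂ x → Function.minimalPeriod (⇑f) x = l + 2 * n₂ := by
    intro x hx
    rw [← GreenAux5.card_sameCycle_eq_minimalPeriod f x, ← hB]
    exact Nat.card_congr (Equiv.subtypeEquivRight
      (fun y => ⟨fun h => hx.trans h, fun h => hx.symm.trans h⟩))
  have hmp1 : ∀ x : H, f.SameCycle w₁ x →
      Function.minimalPeriod (⇑(f ^ 2)) x = l / 2 + n₁ := by
    intro x hx
    have hform : ⇑(f ^ 2) = (⇑f)^[2] := by rw [Equiv.Perm.iterate_eq_pow]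
    rw [hform, Function.minimalPeriod_iterate_eq_div_gcd two_ne_zero, hper1 x hx]
    have hg2 : Nat.gcd (l + 2 * n₁) 2 = 2 := Nat.gcd_eq_right ⟨d + n₁, by omega⟩
    rw [hg2]
    omega
  have hmp2 : ∀ x : H, f.SameCycle w₂ x →
      Function.minimalPeriod (⇑(f ^ 2)) x = l / 2 + n₂ := by
    intro x hx
    have hform : ⇑(f ^ 2) = (⇑f)^[2] := by rw [Equiv.Perm.iterate_eq_pow]
    rw [hform, Function.minimalPeriod_iterate_eq_div_gcd two_ne_zero, hper2 x hx]
    have hg2 : Nat.gcd (l + 2 * n₂) 2 = 2 := Nat.gcd_eq_right ⟨d + n₂, by omega⟩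
    rw [hg2]
    omega
  -- each face splits into two double-stepped walks
  have hsplit2 : ∀ w x : H, f.SameCycle w x →
      (f ^ 2).SameCycle w x ∨ (f ^ 2).SameCycle (f w) x := by
    intro w x hwx
    obtain ⟨i, _, hix⟩ := hwx.exists_pow_eq'
    rcases Nat.even_or_odd i with ⟨j, hj⟩ | ⟨j, hj⟩
    · left
      refine ⟨(j : ℤ), ?_⟩
      rw [zpow_natCast, ← pow_mul]
      rw [show 2 * j = i by omega]
      exact hix
    · right
      refine ⟨(j : ℤ), ?_⟩
      rw [zpow_natCast, ← pow_mul]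
      have : (f ^ (2 * j)) (f w) = (f ^ (2 * j + 1)) w := by
        rw [pow_succ, Equiv.Perm.mul_apply]
      rw [this, show 2 * j + 1 = i by omega]
      exact hix
  have hback : ∀ u v : H, (f ^ 2).SameCycle u v → f.SameCycle u v := by
    rintro u v ⟨i, hi⟩
    exact ⟨((2 : ℕ) : ℤ) * i, by rw [zpow_mul, zpow_natCast]; exact hi⟩
  have hnc : ∀ w : H, Even (Function.minimalPeriod (⇑f) w) →
      ¬ (f ^ 2).SameCycle w (f w) := by
    rintro w hev ⟨i, hi⟩
    have h2i : (f ^ (((2 : ℕ) : ℤ) * i)) w = f w := by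
      rw [zpow_mul, zpow_natCast]; exact hi
    have hfix : (f ^ ((-1 : ℤ) + ((2 : ℕ) : ℤ) * i)) w = w := by
      rw [zpow_add, Equiv.Perm.mul_apply, h2i]
      simp
    have hdvd := GreenAux5.minimalPeriod_int_dvd f w hfix
    obtain ⟨e, he⟩ := hev
    obtain ⟨c, hc⟩ : (2 : ℤ) ∣ (-1 + ((2 : ℕ) : ℤ) * i) := by
      refine dvd_trans ⟨e, ?_⟩ hdvd
      push_cast [he]
      ring
    omega
  have hSCw1fw1 : f.SameCycle w₁ (f w₁) := ⟨1, by simp⟩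
  have hSCw2fw2 : f.SameCycle w₂ (f w₂) := ⟨1, by simp⟩
  have hev1 : Even (Function.minimalPeriod (⇑f) w₁) := by
    rw [hper1 w₁ (Equiv.Perm.SameCycle.refl f w₁)]
    exact ⟨d + n₁, by omega⟩
  have hev2 : Even (Function.minimalPeriod (⇑f) w₂) := by
    rw [hper2 w₂ (Equiv.Perm.SameCycle.refl f w₂)]
    exact ⟨d + n₂, by omega⟩
  have hnc1 := hnc w₁ hev1
  have hnc2 := hnc w₂ hev2
  -- the four classes
  have hcover : ∀ x : H, (f ^ 2).SameCycle w₁ x ∨ (f ^ 2).SameCycle (f w₁) x ∨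
      (f ^ 2).SameCycle w₂ x ∨ (f ^ 2).SameCycle (f w₂) x := by
    intro x
    rcases hall x with h | h
    · rcases hsplit2 w₁ x h with h' | h'
      · exact Or.inl h'
      · exact Or.inr (Or.inl h')
    · rcases hsplit2 w₂ x h with h' | h'
      · exact Or.inr (Or.inr (Or.inl h'))
      · exact Or.inr (Or.inr (Or.inr h'))
  set g : H → Fin 4 := fun x =>
    if (f ^ 2).SameCycle w₁ x then 0
    else if (f ^ 2).SameCycle (f w₁) x then 1
    else if (f ^ 2).SameCycle w₂ x then 2 else 3 with hg
  have hval0 : ∀ x : H, g x = 0 → (f ^ 2).SameCycle w₁ x := by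
    intro x h
    by_cases h1 : (f ^ 2).SameCycle w₁ x
    · exact h1
    · exfalso
      simp only [hg, if_neg h1] at h
      split_ifs at h <;> exact absurd h (by decide)
  have hval1 : ∀ x : H, g x = 1 → (f ^ 2).SameCycle (f w₁) x := by
    intro x h
    by_cases h1 : (f ^ 2).SameCycle w₁ x
    · exfalso; simp only [hg, if_pos h1] at h; exact absurd h (by decide)
    · by_cases h2 : (f ^ 2).SameCycle (f w₁) x
      · exact h2
      · exfalso
        simp only [hg, if_neg h1, if_neg h2] at h
        split_ifs at h <;> exact absurd h (by decide)
  have hval2 : ∀ x : H, g x = 2 → (f ^ 2).SameCycle w₂ x := by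
    intro x h
    by_cases h1 : (f ^ 2).SameCycle w₁ x
    · exfalso; simp only [hg, if_pos h1] at h; exact absurd h (by decide)
    · by_cases h2 : (f ^ 2).SameCycle (f w₁) x
      · exfalso; simp only [hg, if_neg h1, if_pos h2] at h; exact absurd h (by decide)
      · by_cases h3 : (f ^ 2).SameCycle w₂ x
        · exact h3
        · exfalso; simp only [hg, if_neg h1, if_neg h2, if_neg h3] at h
          exact absurd h (by decide)
  have hval3 : ∀ x : H, g x = 3 → (f ^ 2).SameCycle (f w₂) x := by
    intro x h
    by_cases h1 : (f ^ 2).SameCycle w₁ x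
    · exfalso; simp only [hg, if_pos h1] at h; exact absurd h (by decide)
    · by_cases h2 : (f ^ 2).SameCycle (f w₁) x
      · exfalso; simp only [hg, if_neg h1, if_pos h2] at h; exact absurd h (by decide)
      · by_cases h3 : (f ^ 2).SameCycle w₂ x
        · exfalso; simp only [hg, if_neg h1, if_neg h2, if_pos h3] at h
          exact absurd h (by decide)
        · exact ((hcover x).resolve_left h1).resolve_left h2 |>.resolve_left h3
  have hcomp : ∀ x y : H, (sameCycleSetoid (f ^ 2)) x y → g x = g y := by
    intro x y hxy
    have hxy' : (f ^ 2).SameCycle x y := hxy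
    have e1 : (f ^ 2).SameCycle w₁ x ↔ (f ^ 2).SameCycle w₁ y :=
      ⟨fun h => h.trans hxy', fun h => h.trans hxy'.symm⟩
    have e2 : (f ^ 2).SameCycle (f w₁) x ↔ (f ^ 2).SameCycle (f w₁) y :=
      ⟨fun h => h.trans hxy', fun h => h.trans hxy'.symm⟩
    have e3 : (f ^ 2).SameCycle w₂ x ↔ (f ^ 2).SameCycle w₂ y :=
      ⟨fun h => h.trans hxy', fun h => h.trans hxy'.symm⟩
    simp only [hg, e1, e2, e3]
  have hcount : Nat.card (Quotient (sameCycleSetoid (f ^ 2))) = 4 := by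
    have hbij : Function.Bijective
        ((Quotient.lift g hcomp) : Quotient (sameCycleSetoid (f ^ 2)) → Fin 4) := by
      constructor
      · intro q q'
        induction q using Quotient.inductionOn with
        | h x =>
        induction q' using Quotient.inductionOn with
        | h y =>
        intro hgxy
        simp only [Quotient.lift_mk] at hgxy
        refine Quotient.sound (?_ : (f ^ 2).SameCycle x y)
        by_cases h1 : (f ^ 2).SameCycle w₁ x
        · have hx0 : g x = 0 := by simp only [hg, if_pos h1]
          exact h1.symm.trans (hval0 y (by rw [← hgxy, hx0]))
        · by_cases h2 : (f ^ 2).SameCycle (f w₁) x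
          · have hx1 : g x = 1 := by simp only [hg, if_neg h1, if_pos h2]
            exact h2.symm.trans (hval1 y (by rw [← hgxy, hx1]))
          · by_cases h3 : (f ^ 2).SameCycle w₂ x
            · have hx2 : g x = 2 := by simp only [hg, if_neg h1, if_neg h2, if_pos h3]
              exact h3.symm.trans (hval2 y (by rw [← hgxy, hx2]))
            · have h4 : (f ^ 2).SameCycle (f w₂) x :=
                ((hcover x).resolve_left h1).resolve_left h2 |>.resolve_left h3
              have hx3 : g x = 3 := by
                simp only [hg, if_neg h1, if_neg h2, if_neg h3]
              exact h4.symm.trans (hval3 y (by rw [← hgxy, hx3]))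
      · intro k
        have hq1 : ¬ (f ^ 2).SameCycle w₁ w₂ := fun h => hdist (hback _ _ h)
        have hq2 : ¬ (f ^ 2).SameCycle (f w₁) w₂ :=
          fun h => hdist (hSCw1fw1.trans (hback _ _ h))
        have hq3 : ¬ (f ^ 2).SameCycle w₁ (f w₂) :=
          fun h => hdist ((hback _ _ h).trans hSCw2fw2.symm)
        have hq4 : ¬ (f ^ 2).SameCycle (f w₁) (f w₂) :=
          fun h => hdist (hSCw1fw1.trans ((hback _ _ h).trans hSCw2fw2.symm))
        fin_cases k
        · refine ⟨Quotient.mk _ w₁, ?_⟩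
          simp only [Quotient.lift_mk, hg, if_pos (Equiv.Perm.SameCycle.refl _ w₁)]
          rfl
        · refine ⟨Quotient.mk _ (f w₁), ?_⟩
          simp only [Quotient.lift_mk, hg, if_neg hnc1,
            if_pos (Equiv.Perm.SameCycle.refl _ (f w₁))]
          rfl
        · refine ⟨Quotient.mk _ w₂, ?_⟩
          simp only [Quotient.lift_mk, hg, if_neg hq1, if_neg hq2,
            if_pos (Equiv.Perm.SameCycle.refl _ w₂)]
          rfl
        · refine ⟨Quotient.mk _ (f w₂), ?_⟩
          simp only [Quotient.lift_mk, hg, if_neg hq3, if_neg hq4, if_neg hnc2]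
          rfl
    rw [Nat.card_eq_of_bijective _ hbij, Nat.card_eq_fintype_card, Fintype.card_fin]
  exact ⟨hcount, hmp1, hmp2⟩
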